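/- arXiv:2405.05549 — 2 statements merged into one kernel-verified Lean document; each statement's English description precedes it below -/
import Mathlib

section
/- Let γ₁, ..., γ_K ∈ ℂ with |γ₁|² ≤ ... ≤ |γ_K|², σ² > 0, P_max > 0. Define η̃_k = ((σ² + Σ_{j=1}^k P_max|γ_j|²) / (Σ_{j=1}^k √(P_max)|γ_j|))² and f(η) = Σ_{k=1}^K (min{√(P_max|γ_k|²), √η}/√η - 1)²·[P_max|γ_k|² < η] + σ²/η (the MSE after optimal power allocation). Then min_{η>0} f(η) ≥ σ²/η̃₁ = P_max σ² |γ₁|² / (σ² + P_max|γ₁|²)². -/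
open Finset

/-- With `|γ₁|² ≤ … ≤ |γ_K|²` (index `0` plays the role of `1`),
`η̃₁ = ((σ² + P_max|γ₁|²)/(√(P_max)|γ₁|))²`, and
`f(η) = Σ_{k : P_max|γ_k|² < η} (√(P_max)|γ_k|/√η - 1)² + σ²/η`
(the MSE after optimal power allocation), the minimum of `f` over `η > 0` satisfies
`f(η) ≥ σ²/η̃₁ = P_max σ² |γ₁|² / (σ² + P_max|γ₁|²)²` for every `η > 0`. -/
theorem stmt7 (K : ℕ) (γ : Fin (K + 1) → ℂ) (hγ : ∀ k, γ k ≠ 0)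
    (hmono : ∀ i j : Fin (K + 1), i ≤ j → ‖γ i‖ ^ 2 ≤ ‖γ j‖ ^ 2)
    (σsq Pmax : ℝ) (hσ : 0 < σsq) (hP : 0 < Pmax)
    (f : ℝ → ℝ)
    (hf : ∀ η, f η =
      (∑ k ∈ Finset.univ.filter (fun k : Fin (K + 1) => Pmax * ‖γ k‖ ^ 2 < η),
        (Real.sqrt Pmax * ‖γ k‖ / Real.sqrt η - 1) ^ 2) + σsq / η)
    (ηtilde1 : ℝ)
    (hηtilde1 : ηtilde1 = ((σsq + Pmax * ‖γ 0‖ ^ 2) /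
        (Real.sqrt Pmax * ‖γ 0‖)) ^ 2) :
    σsq / ηtilde1 =
      Pmax * σsq * ‖γ 0‖ ^ 2 / (σsq + Pmax * ‖γ 0‖ ^ 2) ^ 2 ∧
    ∀ η, 0 < η → σsq / ηtilde1 ≤ f η := by
  have hA0 : 0 < ‖γ 0‖ := norm_pos_iff.mpr (hγ 0)
  set A := ‖γ 0‖ with hA
  set a := Real.sqrt Pmax * A with ha
  have ha0 : 0 < a := mul_pos (Real.sqrt_pos.2 hP) hA0
  have ha2 : a ^ 2 = Pmax * A ^ 2 := by
    rw [ha, mul_pow, Real.sq_sqrt hP.le]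
  set c := σsq + Pmax * A ^ 2 with hc
  have hc0 : 0 < c := by nlinarith
  have hac : a ^ 2 ≤ c := by rw [ha2, hc]; linarith
  have hη1 : ηtilde1 = c ^ 2 / a ^ 2 := by rw [hηtilde1, div_pow]
  have hη1pos : 0 < ηtilde1 := by rw [hη1]; positivity
  have hval : σsq / ηtilde1 = σsq * a ^ 2 / c ^ 2 := by
    rw [hη1, div_div_eq_mul_div]
  constructor
  · rw [hval, ha2]; ring
  · intro η hη
    rw [hf]
    set s := Real.sqrt η with hs
    have hs0 : 0 < s := Real.sqrt_pos.2 hη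
    have hs2 : s ^ 2 = η := Real.sq_sqrt hη.le
    by_cases hcase : Pmax * A ^ 2 < η
    · have hmem : (0 : Fin (K + 1)) ∈
          Finset.univ.filter (fun k : Fin (K + 1) => Pmax * ‖γ k‖ ^ 2 < η) :=
        Finset.mem_filter.2 ⟨Finset.mem_univ _, hcase⟩
      have hle : (a / s - 1) ^ 2 ≤
          ∑ k ∈ Finset.univ.filter (fun k : Fin (K + 1) => Pmax * ‖γ k‖ ^ 2 < η),
            (Real.sqrt Pmax * ‖γ k‖ / Real.sqrt η - 1) ^ 2 :=
        Finset.single_le_sum (f := fun k : Fin (K + 1) =>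
          (Real.sqrt Pmax * ‖γ k‖ / Real.sqrt η - 1) ^ 2)
          (fun i _ => sq_nonneg _) hmem
      have key : σsq * a ^ 2 / c ^ 2 ≤ (a / s - 1) ^ 2 + σsq / η := by
        rw [← hs2]
        have hca : c = σsq + a ^ 2 := by rw [hc, ha2]
        have h1 : σsq * a ^ 2 * s ^ 2 ≤ ((a - s) ^ 2 + σsq) * c ^ 2 := by
          rw [hca]
          nlinarith [mul_nonneg (by positivity : (0:ℝ) ≤ σsq + a ^ 2)
              (sq_nonneg (σsq + a ^ 2 - a * s)),
            mul_nonneg (mul_nonneg hσ.le hσ.le) (sq_nonneg s)]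
        have h2 : (a / s - 1) ^ 2 + σsq / s ^ 2 = ((a - s) ^ 2 + σsq) / s ^ 2 := by
          field_simp
        rw [h2, div_le_div_iff₀ (by positivity) (by positivity)]
        linarith
      rw [hval]
      linarith
    · have hηa : η ≤ a ^ 2 := by rw [ha2]; exact not_lt.1 hcase
      have hηle : η ≤ ηtilde1 := by
        rw [hη1]
        have h2 : a ^ 2 ≤ c ^ 2 / a ^ 2 := by
          rw [le_div_iff₀ (by positivity)]
          nlinarith
        linarith
      have hdiv : σsq / ηtilde1 ≤ σsq / η :=
        div_le_div_of_nonneg_left hσ.le hη hηle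
      have hsum : 0 ≤
          ∑ k ∈ Finset.univ.filter (fun k : Fin (K + 1) => Pmax * ‖γ k‖ ^ 2 < η),
            (Real.sqrt Pmax * ‖γ k‖ / Real.sqrt η - 1) ^ 2 :=
        Finset.sum_nonneg (fun i _ => sq_nonneg _)
      linarith
end

section
/- With the notation of the optimal AirComp power control, the optimal MSE satisfies MSE_o ≤ σ²/(P_max |γ₁|²), i.e., the channel-inversion value upper-bounds the optimum. Combined with the lower bound MSE_o ≥ P_max σ²|γ₁|²/(σ² + P_max|γ₁|²)², we get P_max σ²|γ₁|²/(σ² + P_max|γ₁|²)² ≤ MSE_o ≤ σ²/(P_max|γ₁|²). -/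
open Finset

/-- With `MSE_o = inf` over feasible `(p, η)` of
`Σ_k (√(p_k)|γ_k|/√η - 1)² + σ²/η` (with `0 ≤ p_k ≤ P_max`, `η > 0`, and
`|γ₁| = min_k |γ_k| > 0`, index `0` playing the role of `1`), we have
`P_max σ²|γ₁|²/(σ² + P_max|γ₁|²)² ≤ MSE_o ≤ σ²/(P_max|γ₁|²)`. -/
theorem stmt12 (K : ℕ) (γ : Fin (K + 1) → ℂ) (hγ : ∀ k, γ k ≠ 0)
    (hmono : ∀ i j : Fin (K + 1), i ≤ j → ‖γ i‖ ≤ ‖γ j‖)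
    (σsq Pmax : ℝ) (hσ : 0 < σsq) (hP : 0 < Pmax)
    (S : Set ℝ)
    (hS : S = {x | ∃ (p : Fin (K + 1) → ℝ) (η : ℝ), (∀ k, 0 ≤ p k ∧ p k ≤ Pmax) ∧ 0 < η ∧
      x = (∑ k, (Real.sqrt (p k) * ‖γ k‖ / Real.sqrt η - 1) ^ 2) + σsq / η}) :
    Pmax * σsq * ‖γ 0‖ ^ 2 / (σsq + Pmax * ‖γ 0‖ ^ 2) ^ 2
        ≤ sInf S ∧
    sInf S ≤ σsq / (Pmax * ‖γ 0‖ ^ 2) := by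
  have hA : ∀ k, 0 < ‖γ k‖ := fun k => by
    simpa using (norm_pos_iff.mpr (hγ k))
  set G : ℝ := Pmax * ‖γ 0‖ ^ 2 with hGdef
  have hG : 0 < G := by
    have := hA 0; positivity
  -- channel inversion point
  have hmem : σsq / G ∈ S := by
    rw [hS]
    refine ⟨fun k => G / ‖γ k‖ ^ 2, G, ?_, hG, ?_⟩
    · intro k
      have hk := hA k
      constructor
      · positivity
      · rw [div_le_iff₀ (by positivity)]
        have h0k := hmono 0 k (Fin.zero_le k)
        have h00 := hA 0
        have := mul_le_mul_of_nonneg_left (pow_le_pow_left₀ h00.le h0k 2) hP.le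
        rw [hGdef]
        nlinarith
    · have hz : ∀ k : Fin (K + 1),
          Real.sqrt (G / ‖γ k‖ ^ 2) * ‖γ k‖ / Real.sqrt G - 1 = 0 := by
        intro k
        have hk := hA k
        rw [Real.sqrt_div hG.le, Real.sqrt_sq hk.le]
        have hsG : (0:ℝ) < Real.sqrt G := Real.sqrt_pos.mpr hG
        field_simp
        norm_num
      have : (∑ k, (Real.sqrt (G / ‖γ k‖ ^ 2) * ‖γ k‖ / Real.sqrt G - 1) ^ 2)
          = 0 := by
        apply Finset.sum_eq_zero
        intro k _
        rw [hz k]; ring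
      rw [this]; ring
  -- lower bound for every element of S
  have hlb : ∀ x ∈ S, Pmax * σsq * ‖γ 0‖ ^ 2 / (σsq + G) ^ 2 ≤ x := by
    rw [hS]
    rintro x ⟨p, η, hp, hη, rfl⟩
    set a : ℝ := Real.sqrt (p 0) * ‖γ 0‖ / Real.sqrt η with ha
    have hsum : (a - 1) ^ 2 ≤
        ∑ k, (Real.sqrt (p k) * ‖γ k‖ / Real.sqrt η - 1) ^ 2 :=
      Finset.single_le_sum (f := fun k =>
        (Real.sqrt (p k) * ‖γ k‖ / Real.sqrt η - 1) ^ 2)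
        (fun i _ => sq_nonneg _) (Finset.mem_univ 0)
    have ha2 : a ^ 2 * η ≤ G := by
      have h1 : a ^ 2 = p 0 * ‖γ 0‖ ^ 2 / η := by
        rw [ha, div_pow, mul_pow, Real.sq_sqrt (hp 0).1, Real.sq_sqrt hη.le]
      rw [h1, div_mul_cancel₀ _ (ne_of_gt hη), hGdef]
      have := (hp 0).2
      nlinarith [sq_nonneg (‖γ 0‖), hA 0]
    have hnoise : σsq * a ^ 2 / G ≤ σsq / η := by
      rw [div_le_div_iff₀ hG hη]
      nlinarith
    have key : Pmax * σsq * ‖γ 0‖ ^ 2 / (σsq + G) ^ 2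
        ≤ (a - 1) ^ 2 + σsq * a ^ 2 / G := by
      have hrhs : (a - 1) ^ 2 + σsq * a ^ 2 / G = ((a - 1) ^ 2 * G + σsq * a ^ 2) / G := by
        field_simp
      rw [hrhs, div_le_div_iff₀ (by positivity) hG]
      have hL : Pmax * σsq * ‖γ 0‖ ^ 2 = σsq * G := by rw [hGdef]; ring
      rw [hL]
      nlinarith [sq_nonneg ((G + σsq) * a - G), mul_nonneg (add_pos hσ hG).le
        (sq_nonneg ((G + σsq) * a - G)), mul_pos hG hσ, mul_pos (mul_pos hG hσ) hσ]
    calc Pmax * σsq * ‖γ 0‖ ^ 2 / (σsq + G) ^ 2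
        ≤ (a - 1) ^ 2 + σsq * a ^ 2 / G := key
      _ ≤ (∑ k, (Real.sqrt (p k) * ‖γ k‖ / Real.sqrt η - 1) ^ 2) + σsq / η := by
          exact add_le_add hsum hnoise
  have hne : S.Nonempty := ⟨_, hmem⟩
  have hbdd : BddBelow S := ⟨_, fun x hx => hlb x hx⟩
  exact ⟨le_csInf hne (fun x hx => hlb x hx), csInf_le hbdd hmem⟩
end
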